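/- Let T be an N×N normal complex matrix and let k be an integer with 2k > N. Then λ₀ ∈ Λ_k(T) if and only if there exist a (2N−2k)×(2N−2k) complex matrix T₀ and an N×N unitary matrix V such that V*TV is the direct sum λ₀·I_{2k−N} ⊕ T₀ (block diagonal with blocks λ₀·I_{2k−N} and T₀) and λ₀ belongs to Λ_{N−k}(T₀). -/

import Mathlib

open Matrix Complex

/-- The rank-k numerical range of a square complex matrix `T`:
all `λ ∈ ℂ` such that `P T P = λ P` for some orthogonal projection `P` of rank `k`. -/
def rankKRange {n : Type*} [Fintype n] [DecidableEq n]
    (k : ℕ) (T : Matrix n n ℂ) : Set ℂ :=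
  {lam : ℂ | ∃ P : Matrix n n ℂ,
    P.IsHermitian ∧ P * P = P ∧ P.rank = k ∧ P * T * P = lam • P}

lemma rank_eq_trace_of_idem {n : Type*} [Fintype n] [DecidableEq n] (P : Matrix n n ℂ)
    (h : P * P = P) : (P.rank : ℂ) = P.trace := by
  have hproj : LinearMap.IsProj (LinearMap.range P.mulVecLin) P.mulVecLin := by
    refine ⟨fun x => LinearMap.mem_range_self _ x, ?_⟩
    rintro x ⟨y, rfl⟩
    have : (P * P).mulVecLin y = P.mulVecLin y := by rw [h]
    simpa [Matrix.mulVecLin_mul] using this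
  have := hproj.trace
  rw [Matrix.rank, ← this, LinearMap.trace_eq_matrix_trace ℂ (Pi.basisFun ℂ n),
    LinearMap.toMatrix_eq_toMatrix']
  congr 1
  exact LinearMap.toMatrix'_toLin' P

lemma exists_w (N k : ℕ) (hk : 2 * k > N) (hkN : k ≤ N)
    (P A : Matrix (Fin N) (Fin N) ℂ) (hP2 : P * P = P) (hPr : P.rank = k)
    (hPA : P * A * P = 0) :
    ∃ w : Fin (2 * k - N) → EuclideanSpace ℂ (Fin N), Orthonormal ℂ w ∧
      ∀ j, P *ᵥ (w j) = w j ∧ A *ᵥ (w j) = 0 := by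
  classical
  set E := EuclideanSpace ℂ (Fin N)
  let fP : E →ₗ[ℂ] E := Matrix.toEuclideanLin P
  let fA : E →ₗ[ℂ] E := Matrix.toEuclideanLin A
  have hfP : ∀ v : E, fP v = P *ᵥ v := fun _ => rfl
  have hfA : ∀ v : E, fA v = A *ᵥ v := fun _ => rfl
  have hE : Module.finrank ℂ E = N := finrank_euclideanSpace_fin
  have hrange : Module.finrank ℂ (LinearMap.range fP) = k := by
    have h1 := Matrix.rank_eq_finrank_range_toLin P (PiLp.basisFun 2 ℂ (Fin N))
      (PiLp.basisFun 2 ℂ (Fin N))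
    have h2 : fP = Matrix.toLin (PiLp.basisFun 2 ℂ (Fin N)) (PiLp.basisFun 2 ℂ (Fin N)) P := by
      show Matrix.toEuclideanLin P = _
      rw [Matrix.toEuclideanLin_eq_toLin]
    rw [← h2] at h1
    rw [← h1, hPr]
  -- fixed points of P
  have hfix : ∀ x ∈ LinearMap.range fP, fP x = x := by
    rintro x ⟨y, rfl⟩
    apply WithLp.ofLp_injective 2
    rw [hfP, hfP, Matrix.mulVec_mulVec, hP2]
  have hker : Module.finrank ℂ (LinearMap.ker fP) = N - k := by
    have := LinearMap.finrank_range_add_finrank_ker fP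
    rw [hE, hrange] at this
    omega
  let g : (LinearMap.range fP) →ₗ[ℂ] E := fA.comp (LinearMap.range fP).subtype
  have hrg : LinearMap.range g ≤ LinearMap.ker fP := by
    rintro _ ⟨⟨x, hx⟩, rfl⟩
    obtain ⟨y, rfl⟩ := hx
    show fP (fA (fP y)) = 0
    apply WithLp.ofLp_injective 2
    rw [hfP, hfA, hfP, Matrix.mulVec_mulVec, Matrix.mulVec_mulVec, hPA]
    show (0 : Matrix (Fin N) (Fin N) ℂ) *ᵥ y.ofLp = (0 : E).ofLp
    simp
  have hdimg : Module.finrank ℂ (LinearMap.ker g) ≥ 2 * k - N := by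
    have h1 := LinearMap.finrank_range_add_finrank_ker g
    rw [hrange] at h1
    have h2 : Module.finrank ℂ (LinearMap.range g) ≤ N - k :=
      hker ▸ Submodule.finrank_mono hrg
    omega
  -- the subspace K inside E
  set K : Submodule ℂ E := (LinearMap.ker g).map (LinearMap.range fP).subtype with hK
  have hdimK : Module.finrank ℂ K ≥ 2 * k - N := by
    rw [hK, Submodule.finrank_map_subtype_eq]
    exact hdimg
  have hKfix : ∀ x ∈ K, P *ᵥ x = x := by
    rintro _ ⟨⟨x, hx⟩, _, rfl⟩
    rw [← hfP]
    exact congrArg WithLp.ofLp (hfix x hx)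
  have hKA : ∀ x ∈ K, A *ᵥ x = 0 := by
    rintro _ ⟨⟨x, hx⟩, hg, rfl⟩
    rw [← hfA]
    exact congrArg WithLp.ofLp (show g ⟨x, hx⟩ = 0 from hg)
  -- orthonormal basis of K
  let c := stdOrthonormalBasis ℂ K
  have hle : 2 * k - N ≤ Module.finrank ℂ K := hdimK
  refine ⟨fun j => (c (Fin.castLE hle j) : E), ?_, fun j => ?_⟩
  · rw [orthonormal_iff_ite]
    intro i j
    have := orthonormal_iff_ite.mp c.orthonormal (Fin.castLE hle i) (Fin.castLE hle j)
    rw [Submodule.coe_inner] at this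
    rw [this]
    congr 1
    simp [Fin.ext_iff]
  · exact ⟨hKfix _ (c (Fin.castLE hle j)).2, hKA _ (c (Fin.castLE hle j)).2⟩

open scoped ComplexOrder in
lemma normal_ker {n : Type*} [Fintype n] (A : Matrix n n ℂ) (hA : A * Aᴴ = Aᴴ * A)
    (x : n → ℂ) (hx : A *ᵥ x = 0) : Aᴴ *ᵥ x = 0 := by
  have key : dotProduct (star (Aᴴ *ᵥ x)) (Aᴴ *ᵥ x) = 0 := by
    rw [Matrix.star_mulVec, Matrix.conjTranspose_conjTranspose,
      Matrix.dotProduct_mulVec, Matrix.vecMul_vecMul, hA, ← Matrix.vecMul_vecMul,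
      ← Matrix.dotProduct_mulVec, hx, dotProduct_zero]
  exact dotProduct_star_self_eq_zero.mp key

lemma forward_dir (N k : ℕ) (hk : 2 * k > N)
    (T : Matrix (Fin N) (Fin N) ℂ) (hT : T * Tᴴ = Tᴴ * T) (lam₀ : ℂ)
    (hmem : lam₀ ∈ rankKRange k T) :
    ∃ (T₀ : Matrix (Fin (2 * N - 2 * k)) (Fin (2 * N - 2 * k)) ℂ)
      (V : Matrix (Fin N) (Fin (2 * k - N) ⊕ Fin (2 * N - 2 * k)) ℂ),
        Vᴴ * V = 1 ∧ V * Vᴴ = 1 ∧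
        Vᴴ * T * V =
          Matrix.fromBlocks (lam₀ • (1 : Matrix (Fin (2 * k - N)) (Fin (2 * k - N)) ℂ)) 0 0 T₀ ∧
        lam₀ ∈ rankKRange (N - k) T₀ := by
  classical
  obtain ⟨P, hPh, hP2, hPr, hPc⟩ := hmem
  have hkN : k ≤ N := by
    have := P.rank_le_card_height
    simpa [hPr] using this
  set A : Matrix (Fin N) (Fin N) ℂ := T - lam₀ • 1 with hAdef
  have hAnormal : A * Aᴴ = Aᴴ * A := by
    simp only [hAdef, conjTranspose_sub, conjTranspose_smul, conjTranspose_one, Matrix.sub_mul,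
      Matrix.mul_sub, Matrix.smul_mul, Matrix.mul_smul, hT, Matrix.one_mul, Matrix.mul_one,
      smul_smul, smul_sub]
    rw [mul_comm]
    abel
  have hPA : P * A * P = 0 := by
    simp only [hAdef, Matrix.mul_sub, Matrix.sub_mul, Matrix.mul_smul, Matrix.smul_mul,
      Matrix.mul_one, hP2, hPc]
    simp
  obtain ⟨w, horth, hw⟩ := exists_w N k hk hkN P A hP2 hPr hPA
  have hinner : ∀ x y : EuclideanSpace ℂ (Fin N),
      (inner ℂ x y : ℂ) = ∑ i, star (x i) * y i := by
    intro x y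
    simp [PiLp.inner_apply, RCLike.inner_apply, mul_comm]
  -- the matrix W
  set W : Matrix (Fin N) (Fin (2 * k - N)) ℂ := Matrix.of (fun i j => w j i) with hWdef
  have hWW : Wᴴ * W = 1 := by
    ext a b
    have h1 := orthonormal_iff_ite.mp horth a b
    rw [hinner] at h1
    simp only [Matrix.mul_apply, Matrix.conjTranspose_apply, hWdef, Matrix.of_apply]
    rw [h1, Matrix.one_apply]
  have hPW : P * W = W := by
    ext i j
    have := congrFun ((hw j).1) i
    simpa [Matrix.mul_apply, Matrix.mulVec, dotProduct, hWdef] using this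
  have hAW : A * W = 0 := by
    ext i j
    have := congrFun ((hw j).2) i
    simpa [Matrix.mul_apply, Matrix.mulVec, dotProduct, hWdef] using this
  have hAHW : Aᴴ * W = 0 := by
    ext i j
    have := congrFun (normal_ker A hAnormal (w j) ((hw j).2)) i
    simpa [Matrix.mul_apply, Matrix.mulVec, dotProduct, hWdef] using this
  have hTW : T * W = lam₀ • W := by
    have : (T - lam₀ • 1) * W = 0 := hAW
    rw [Matrix.sub_mul, sub_eq_zero, Matrix.smul_mul, Matrix.one_mul] at this
    exact this
  have hTHW : Tᴴ * W = (starRingEnd ℂ lam₀) • W := by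
    have : (T - lam₀ • 1)ᴴ * W = 0 := hAHW
    rw [conjTranspose_sub, conjTranspose_smul, conjTranspose_one, Matrix.sub_mul,
      sub_eq_zero, Matrix.smul_mul, Matrix.one_mul] at this
    exact this
  -- the orthogonal complement of the span of w
  set S₀ : Submodule ℂ (EuclideanSpace ℂ (Fin N)) := Submodule.span ℂ (Set.range w) with hS₀def
  have hS₀dim : Module.finrank ℂ S₀ = 2 * k - N := by
    rw [hS₀def, finrank_span_eq_card horth.linearIndependent, Fintype.card_fin]
  have hperp : Module.finrank ℂ (S₀ᗮ) = 2 * N - 2 * k := by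
    have h1 := Submodule.finrank_add_finrank_orthogonal S₀
    rw [hS₀dim, finrank_euclideanSpace_fin] at h1
    omega
  let b₂ := stdOrthonormalBasis ℂ (S₀ᗮ)
  let u : Fin (2 * N - 2 * k) → EuclideanSpace ℂ (Fin N) :=
    fun j => (b₂ (Fin.cast hperp.symm j) : EuclideanSpace ℂ (Fin N))
  have huorth : Orthonormal ℂ u := by
    rw [orthonormal_iff_ite]
    intro i j
    have := orthonormal_iff_ite.mp b₂.orthonormal (Fin.cast hperp.symm i) (Fin.cast hperp.symm j)
    rw [Submodule.coe_inner] at this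
    rw [this]
    congr 1
    simp [Fin.ext_iff]
  have hwu : ∀ a b, (inner ℂ (w a) (u b) : ℂ) = 0 := by
    intro a b
    have hmem : w a ∈ S₀ := Submodule.subset_span ⟨a, rfl⟩
    exact (Submodule.mem_orthogonal S₀ _).mp (b₂ (Fin.cast hperp.symm b)).2 _ hmem
  set V₂ : Matrix (Fin N) (Fin (2 * N - 2 * k)) ℂ := Matrix.of (fun i j => u j i) with hV₂def
  have hV₂V₂ : V₂ᴴ * V₂ = 1 := by
    ext a b
    have h1 := orthonormal_iff_ite.mp huorth a b
    rw [hinner] at h1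
    simp only [Matrix.mul_apply, Matrix.conjTranspose_apply, hV₂def, Matrix.of_apply]
    rw [h1, Matrix.one_apply]
  have hWV₂ : Wᴴ * V₂ = 0 := by
    ext a b
    have h1 := hwu a b
    rw [hinner] at h1
    simp only [Matrix.mul_apply, Matrix.conjTranspose_apply, hWdef, hV₂def, Matrix.of_apply]
    rw [h1]
    simp
  have hV₂W : V₂ᴴ * W = 0 := by
    have := congrArg Matrix.conjTranspose hWV₂
    simpa [Matrix.conjTranspose_mul] using this
  -- assemble V
  set V : Matrix (Fin N) (Fin (2 * k - N) ⊕ Fin (2 * N - 2 * k)) ℂ :=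
    Matrix.fromCols W V₂ with hVdef
  have hVH : Vᴴ = Matrix.fromRows Wᴴ V₂ᴴ := by
    rw [hVdef, Matrix.conjTranspose_fromCols_eq_fromRows_conjTranspose]
  have hV1 : Vᴴ * V = 1 := by
    rw [hVH, hVdef, Matrix.fromRows_mul_fromCols, hWW, hV₂V₂, hWV₂, hV₂W,
      Matrix.fromBlocks_one]
  have hcard : N = (2 * k - N) + (2 * N - 2 * k) := by omega
  have hV2 : V * Vᴴ = 1 := by
    rw [hVH, hVdef]
    rw [Matrix.fromCols_mul_fromRows_eq_one_comm ((finCongr hcard).trans finSumFinEquiv.symm)]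
    rw [← hVdef, ← hVH, hV1]
  -- the compressed matrix
  set T₀ : Matrix (Fin (2 * N - 2 * k)) (Fin (2 * N - 2 * k)) ℂ := V₂ᴴ * T * V₂ with hT₀def
  have hWT : Wᴴ * T = lam₀ • Wᴴ := by
    have := congrArg Matrix.conjTranspose hTHW
    simpa [Matrix.conjTranspose_mul, Matrix.conjTranspose_smul] using this
  have hblock : Vᴴ * T * V =
      Matrix.fromBlocks (lam₀ • (1 : Matrix (Fin (2 * k - N)) (Fin (2 * k - N)) ℂ)) 0 0 T₀ := by
    have e11 : Wᴴ * T * W = lam₀ • (1 : Matrix (Fin (2 * k - N)) (Fin (2 * k - N)) ℂ) := by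
      rw [Matrix.mul_assoc, hTW, Matrix.mul_smul, hWW]
    have e12 : Wᴴ * T * V₂ = 0 := by rw [hWT, Matrix.smul_mul, hWV₂, smul_zero]
    have e21 : V₂ᴴ * T * W = 0 := by
      rw [Matrix.mul_assoc, hTW, Matrix.mul_smul, hV₂W, smul_zero]
    rw [hVH, hVdef, Matrix.fromRows_mul, Matrix.fromRows_mul_fromCols, e11, e12, e21, hT₀def]
  refine ⟨T₀, V, hV1, hV2, hblock, ?_⟩
  -- the projection for the compressed range
  have hsplit : W * Wᴴ + V₂ * V₂ᴴ = 1 := by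
    rw [← Matrix.fromCols_mul_fromRows, ← hVdef, ← hVH]
    exact hV2
  set P₀ : Matrix (Fin N) (Fin N) ℂ := P - W * Wᴴ with hP₀def
  have hWHP : Wᴴ * P = Wᴴ := by
    have := congrArg Matrix.conjTranspose hPW
    simpa [Matrix.conjTranspose_mul, hPh.eq] using this
  have f1 : P * (W * Wᴴ) = W * Wᴴ := by rw [← Matrix.mul_assoc, hPW]
  have f2 : (W * Wᴴ) * P = W * Wᴴ := by rw [Matrix.mul_assoc, hWHP]
  have f3 : (W * Wᴴ) * (W * Wᴴ) = W * Wᴴ := by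
    rw [Matrix.mul_assoc W Wᴴ (W * Wᴴ), ← Matrix.mul_assoc Wᴴ W Wᴴ, hWW, Matrix.one_mul]
  have hP₀2 : P₀ * P₀ = P₀ := by
    rw [hP₀def, Matrix.sub_mul, Matrix.mul_sub, Matrix.mul_sub, hP2, f1, f2, f3]
    abel
  have hP₀T : P₀ * T * P₀ = lam₀ • P₀ := by
    rw [hP₀def, Matrix.sub_mul, Matrix.mul_sub, Matrix.sub_mul, Matrix.sub_mul, hPc]
    have e1 : W * Wᴴ * T = lam₀ • (W * Wᴴ) := by
      rw [Matrix.mul_assoc]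
      have : Wᴴ * T = lam₀ • Wᴴ := hWT
      rw [this, Matrix.mul_smul]
    have e2 : T * (W * Wᴴ) = lam₀ • (W * Wᴴ) := by
      rw [← Matrix.mul_assoc, hTW, Matrix.smul_mul]
    have e3 : P * T * (W * Wᴴ) = lam₀ • (W * Wᴴ) := by
      rw [Matrix.mul_assoc, e2, Matrix.mul_smul, ← Matrix.mul_assoc, hPW]
    have e4 : W * Wᴴ * T * P = lam₀ • (W * Wᴴ) := by
      rw [e1, Matrix.smul_mul, Matrix.mul_assoc, hWHP]
    have e5 : W * Wᴴ * T * (W * Wᴴ) = lam₀ • (W * Wᴴ) := by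
      rw [e1, Matrix.smul_mul, Matrix.mul_assoc W Wᴴ (W * Wᴴ), ← Matrix.mul_assoc Wᴴ W Wᴴ,
        hWW, Matrix.one_mul]
    rw [e3, e4, e5, smul_sub]
    abel
  have hPi : V₂ * V₂ᴴ = 1 - W * Wᴴ := by
    rw [← hsplit]; abel
  have hPiP₀ : (V₂ * V₂ᴴ) * P₀ = P₀ := by
    rw [hPi, hP₀def, Matrix.sub_mul, Matrix.mul_sub, Matrix.mul_sub, Matrix.one_mul,
      Matrix.one_mul, f2, f3]
    abel
  have hP₀Pi : P₀ * (V₂ * V₂ᴴ) = P₀ := by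
    rw [hPi, hP₀def, Matrix.sub_mul, Matrix.mul_sub, Matrix.mul_sub, Matrix.mul_one,
      Matrix.mul_one, f1, f3]
    abel
  set Q : Matrix (Fin (2 * N - 2 * k)) (Fin (2 * N - 2 * k)) ℂ := V₂ᴴ * P₀ * V₂ with hQdef
  have hQh : Q.IsHermitian := by
    have hP₀h : P₀ᴴ = P₀ := by
      rw [hP₀def, conjTranspose_sub, hPh.eq, Matrix.conjTranspose_mul,
        Matrix.conjTranspose_conjTranspose]
    show Qᴴ = Q
    rw [hQdef, Matrix.conjTranspose_mul, Matrix.conjTranspose_mul, hP₀h,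
      Matrix.conjTranspose_conjTranspose, Matrix.mul_assoc]
  have hQ2 : Q * Q = Q := by
    rw [hQdef]
    calc V₂ᴴ * P₀ * V₂ * (V₂ᴴ * P₀ * V₂) = V₂ᴴ * (P₀ * (V₂ * V₂ᴴ) * P₀) * V₂ := by
          simp only [Matrix.mul_assoc]
    _ = V₂ᴴ * P₀ * V₂ := by rw [hP₀Pi, hP₀2, Matrix.mul_assoc]
  have hQT : Q * T₀ * Q = lam₀ • Q := by
    rw [hQdef, hT₀def]
    calc V₂ᴴ * P₀ * V₂ * (V₂ᴴ * T * V₂) * (V₂ᴴ * P₀ * V₂)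
        = V₂ᴴ * ((P₀ * (V₂ * V₂ᴴ)) * T * ((V₂ * V₂ᴴ) * P₀)) * V₂ := by
          simp only [Matrix.mul_assoc]
    _ = V₂ᴴ * (P₀ * T * P₀) * V₂ := by rw [hP₀Pi, hPiP₀]
    _ = lam₀ • (V₂ᴴ * P₀ * V₂) := by
          rw [hP₀T, Matrix.mul_smul, Matrix.smul_mul, Matrix.mul_assoc]
  have hQr : Q.rank = N - k := by
    have h3 := rank_eq_trace_of_idem Q hQ2
    have h4 := rank_eq_trace_of_idem P hP2
    rw [hPr] at h4
    have htr : Q.trace = (k : ℂ) - ((2 * k - N : ℕ) : ℂ) := by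
      rw [hQdef, Matrix.trace_mul_cycle, hPiP₀, hP₀def, Matrix.trace_sub, ← h4,
        Matrix.trace_mul_comm W Wᴴ, hWW, Matrix.trace_one]
      simp
    rw [htr] at h3
    have hcast : ((N - k : ℕ) : ℂ) = (k : ℂ) - ((2 * k - N : ℕ) : ℂ) := by
      rw [Nat.cast_sub hkN, Nat.cast_sub (le_of_lt hk)]
      push_cast
      ring
    have : ((Q.rank : ℕ) : ℂ) = ((N - k : ℕ) : ℂ) := by rw [h3, hcast]
    exact_mod_cast this
  exact ⟨Q, hQh, hQ2, hQr, hQT⟩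

lemma backward_dir (N k : ℕ) (hk : 2 * k > N)
    (T : Matrix (Fin N) (Fin N) ℂ) (lam₀ : ℂ)
    (T₀ : Matrix (Fin (2 * N - 2 * k)) (Fin (2 * N - 2 * k)) ℂ)
    (V : Matrix (Fin N) (Fin (2 * k - N) ⊕ Fin (2 * N - 2 * k)) ℂ)
    (h1 : Vᴴ * V = 1) (h2 : V * Vᴴ = 1)
    (hb : Vᴴ * T * V =
      Matrix.fromBlocks (lam₀ • (1 : Matrix (Fin (2 * k - N)) (Fin (2 * k - N)) ℂ)) 0 0 T₀)
    (hm : lam₀ ∈ rankKRange (N - k) T₀) : lam₀ ∈ rankKRange k T := by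
  obtain ⟨Q, hQh, hQi, hQr, hQc⟩ := hm
  -- card equality
  have hcard : (2 * k - N) + (2 * N - 2 * k) = N := by
    have := congrArg Matrix.trace h1
    rw [Matrix.trace_mul_comm, h2] at this
    have h5 : (((2 * k - N) + (2 * N - 2 * k) : ℕ) : ℂ) = (N : ℂ) := by
      norm_num
      simpa [Matrix.trace_one] using this.symm
    exact Nat.cast_injective h5
  set R : Matrix (Fin (2 * k - N) ⊕ Fin (2 * N - 2 * k))
      (Fin (2 * k - N) ⊕ Fin (2 * N - 2 * k)) ℂ := Matrix.fromBlocks 1 0 0 Q with hR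
  have hRherm : Rᴴ = R := by
    simp [hR, Matrix.fromBlocks_conjTranspose, hQh.eq]
  have hRidem : R * R = R := by
    simp [hR, Matrix.fromBlocks_multiply, hQi]
  refine ⟨V * R * Vᴴ, ?_, ?_, ?_, ?_⟩
  · show (V * R * Vᴴ)ᴴ = _
    simp [Matrix.conjTranspose_mul, hRherm, Matrix.mul_assoc]
  · calc V * R * Vᴴ * (V * R * Vᴴ) = V * (R * (Vᴴ * V) * R) * Vᴴ := by
          simp only [Matrix.mul_assoc]
    _ = V * R * Vᴴ := by rw [h1, Matrix.mul_one, hRidem]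
  · -- rank
    have hidem : (V * R * Vᴴ) * (V * R * Vᴴ) = V * R * Vᴴ := by
      calc V * R * Vᴴ * (V * R * Vᴴ) = V * (R * (Vᴴ * V) * R) * Vᴴ := by
            simp only [Matrix.mul_assoc]
      _ = V * R * Vᴴ := by rw [h1, Matrix.mul_one, hRidem]
    have h3 := rank_eq_trace_of_idem _ hidem
    have h4 := rank_eq_trace_of_idem _ hQi
    rw [hQr] at h4
    have htr : (V * R * Vᴴ).trace = ((2 * k - N : ℕ) : ℂ) + ((N - k : ℕ) : ℂ) := by
      rw [Matrix.trace_mul_cycle, h1, Matrix.one_mul, hR]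
      rw [show (Matrix.fromBlocks (1 : Matrix (Fin (2*k-N)) (Fin (2*k-N)) ℂ) 0 0 Q).trace
          = Matrix.trace (1 : Matrix (Fin (2*k-N)) (Fin (2*k-N)) ℂ) + Q.trace from by
        simp [Matrix.trace, Matrix.diag, Fintype.sum_sum_type]]
      rw [Matrix.trace_one, ← h4]
      simp
    rw [htr] at h3
    have : ((V * R * Vᴴ).rank : ℂ) = ((k : ℕ) : ℂ) := by
      rw [h3]; norm_cast; omega
    exact_mod_cast this
  · -- compression
    have hT : T = V * (Matrix.fromBlocks (lam₀ • (1 : Matrix (Fin (2 * k - N)) (Fin (2 * k - N)) ℂ)) 0 0 T₀) * Vᴴ := by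
      rw [← hb]
      calc T = (V * Vᴴ) * T * (V * Vᴴ) := by rw [h2, Matrix.one_mul, Matrix.mul_one]
      _ = V * (Vᴴ * T * V) * Vᴴ := by simp only [Matrix.mul_assoc]
    have key : R * (Matrix.fromBlocks (lam₀ • (1 : Matrix (Fin (2 * k - N)) (Fin (2 * k - N)) ℂ)) 0 0 T₀) * R = lam₀ • R := by
      simp [hR, Matrix.fromBlocks_multiply, hQc]
      simp [Matrix.fromBlocks_smul]
    calc V * R * Vᴴ * T * (V * R * Vᴴ)
        = V * (R * (Vᴴ * T * V) * R) * Vᴴ := by simp only [Matrix.mul_assoc]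
      _ = V * (lam₀ • R) * Vᴴ := by rw [hb, key]
      _ = lam₀ • (V * R * Vᴴ) := by
          rw [Matrix.mul_smul, Matrix.smul_mul]

/-- for normal T and 2k > N, λ₀ ∈ Λ_k(T) iff T is unitarily equivalent
to λ₀·I_{2k−N} ⊕ T₀ with λ₀ ∈ Λ_{N−k}(T₀). -/
theorem rankKRange_normal_two_k_gt (N k : ℕ) (hk : 2 * k > N)
    (T : Matrix (Fin N) (Fin N) ℂ) (hT : T * Tᴴ = Tᴴ * T) (lam₀ : ℂ) :
    lam₀ ∈ rankKRange k T ↔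
      ∃ (T₀ : Matrix (Fin (2 * N - 2 * k)) (Fin (2 * N - 2 * k)) ℂ)
        (V : Matrix (Fin N) (Fin (2 * k - N) ⊕ Fin (2 * N - 2 * k)) ℂ),
          Vᴴ * V = 1 ∧ V * Vᴴ = 1 ∧
          Vᴴ * T * V =
            Matrix.fromBlocks (lam₀ • (1 : Matrix (Fin (2 * k - N)) (Fin (2 * k - N)) ℂ)) 0 0 T₀ ∧
          lam₀ ∈ rankKRange (N - k) T₀ := by
  constructor
  · exact forward_dir N k hk T hT lam₀
  · rintro ⟨T₀, V, h1, h2, hb, hm⟩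
    exact backward_dir N k hk T lam₀ T₀ V h1 h2 hb hm
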